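/- For all n ≥ 2, the sum of distances d(u,v) over all unordered pairs of distinct vertices {u,v}, summed over all plane trees on n vertices (the total Wiener index of plane trees on n vertices) equals (n-1)·4^(n-2). -/

import Mathlib

inductive PlaneTree : Type where
  | node : List PlaneTree → PlaneTree

namespace PlaneTree

mutual
def size : PlaneTree → ℕ
  | .node ts => 1 + sizeList ts
def sizeList : List PlaneTree → ℕ
  | [] => 0
  | t :: ts => size t + sizeList ts
end

mutual
def positions : PlaneTree → List (List ℕ)
  | .node ts => [] :: positionsList 0 ts
def positionsList : ℕ → List PlaneTree → List (List ℕ)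
  | _, [] => []
  | i, t :: ts => (positions t).map (i :: ·) ++ positionsList (i+1) ts
end

mutual
def leafPositions : PlaneTree → List (List ℕ)
  | .node [] => [[]]
  | .node (t :: ts) => leafList 0 (t :: ts)
def leafList : ℕ → List PlaneTree → List (List ℕ)
  | _, [] => []
  | i, t :: ts => (leafPositions t).map (i :: ·) ++ leafList (i+1) ts
end

def isPrefixB : List ℕ → List ℕ → Bool
  | [], _ => true
  | _ :: _, [] => false
  | a :: as, b :: bs => a == b && isPrefixB as bs

def lcpLen : List ℕ → List ℕ → ℕ
  | a :: as, b :: bs => if a = b then 1 + lcpLen as bs else 0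
  | _, _ => 0

/-- number of edges on the path between two vertices given by positions -/
def pathDist (p q : List ℕ) : ℕ :=
  (p.length - lcpLen p q) + (q.length - lcpLen p q)

/-- number of vertical paths (vertex, proper descendant) in a tree -/
def verticalPairs (T : PlaneTree) : ℕ :=
  ((positions T).map (fun q =>
    ((positions T).filter (fun p => p != q && isPrefixB p q)).length)).sum

/-- total number of edges over all vertical paths in a tree -/
def verticalEdges (T : PlaneTree) : ℕ :=
  ((positions T).map (fun q =>
    (((positions T).filter (fun p => p != q && isPrefixB p q)).map
      (fun p => q.length - p.length)).sum)).sum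

/-- number of (unordered) paths between distinct vertices -/
def pathCount (T : PlaneTree) : ℕ := ((positions T).sublistsLen 2).length

/-- Wiener index: sum of distances over unordered pairs of distinct vertices -/
def wiener (T : PlaneTree) : ℕ :=
  (((positions T).sublistsLen 2).map (fun l =>
    match l with
    | [p, q] => pathDist p q
    | _ => 0)).sum


/-! ### Part 1: structural lemmas for wiener -/

def depthSum (L : List (List ℕ)) : ℕ := (L.map List.length).sum

def pairSum : List (List ℕ) → ℕ
  | [] => 0
  | p :: L => (L.map (pathDist p)).sum + pairSum L

def dsum (T : PlaneTree) : ℕ := depthSum (positions T)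

def shiftPos : List ℕ → List ℕ
  | [] => []
  | j :: p => (j+1) :: p

lemma lcpLen_le_left : ∀ p q : List ℕ, lcpLen p q ≤ p.length
  | [], _ => by simp [lcpLen]
  | _ :: _, [] => by simp [lcpLen]
  | a :: as, b :: bs => by
    simp only [lcpLen, List.length_cons]
    split
    · have := lcpLen_le_left as bs; omega
    · omega

lemma lcpLen_le_right : ∀ p q : List ℕ, lcpLen p q ≤ q.length
  | [], _ => by simp [lcpLen]
  | _ :: _, [] => by simp [lcpLen]
  | a :: as, b :: bs => by
    simp only [lcpLen, List.length_cons]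
    split
    · have := lcpLen_le_right as bs; omega
    · omega

lemma pathDist_nil_left (q : List ℕ) : pathDist [] q = q.length := by
  cases q <;> simp [pathDist, lcpLen]

lemma pathDist_cons_same (i : ℕ) (p q : List ℕ) :
    pathDist (i :: p) (i :: q) = pathDist p q := by
  have h1 := lcpLen_le_left p q
  have h2 := lcpLen_le_right p q
  have h3 : lcpLen (i :: p) (i :: q) = 1 + lcpLen p q := by simp [lcpLen]
  simp only [pathDist, h3, List.length_cons]
  omega

lemma pathDist_cons_ne {i j : ℕ} (h : i ≠ j) (p q : List ℕ) :
    pathDist (i :: p) (j :: q) = (p.length + 1) + (q.length + 1) := by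
  simp only [pathDist, lcpLen, List.length_cons, if_neg h]
  omega

lemma pathDist_shift {p q : List ℕ} (hp : p ≠ []) (hq : q ≠ []) :
    pathDist (shiftPos p) (shiftPos q) = pathDist p q := by
  match p, q with
  | a :: p, b :: q =>
    by_cases h : a = b
    · subst h
      simp [shiftPos, pathDist_cons_same]
    · rw [show shiftPos (a :: p) = (a+1) :: p from rfl,
        show shiftPos (b :: q) = (b+1) :: q from rfl,
        pathDist_cons_ne (by omega) p q, pathDist_cons_ne h p q]

lemma pathDist_zero_shift (p : List ℕ) {q : List ℕ} (hq : q ≠ []) :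
    pathDist (0 :: p) (shiftPos q) = (p.length + 1) + q.length := by
  match q with
  | b :: q =>
    rw [show shiftPos (b :: q) = (b+1) :: q from rfl,
      pathDist_cons_ne (by omega) p q]
    simp

lemma length_shiftPos (p : List ℕ) : (shiftPos p).length = p.length := by
  cases p <;> simp [shiftPos]

lemma positionsList_succ (ts : List PlaneTree) :
    ∀ i, positionsList (i+1) ts = (positionsList i ts).map shiftPos := by
  induction ts with
  | nil => intro i; simp [positionsList]
  | cons t ts ih =>
    intro i
    simp only [positionsList, List.map_append, List.map_map, ih (i+1)]
    congr 1

lemma mem_positionsList_ne_nil {p : List ℕ} :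
    ∀ {i : ℕ} {ts : List PlaneTree}, p ∈ positionsList i ts → p ≠ [] := by
  intro i ts
  induction ts generalizing i with
  | nil => simp [positionsList]
  | cons t ts ih =>
    intro h
    simp only [positionsList, List.mem_append, List.mem_map] at h
    rcases h with ⟨q, _, rfl⟩ | h
    · simp
    · exact ih h

mutual
lemma length_positions : ∀ T : PlaneTree, (positions T).length = size T
  | .node ts => by
    simp only [positions, size, List.length_cons, length_positionsList 0 ts]
    omega
lemma length_positionsList : ∀ (i : ℕ) (ts : List PlaneTree),
    (positionsList i ts).length = sizeList ts
  | _, [] => by simp [positionsList, sizeList]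
  | i, t :: ts => by
    simp only [positionsList, List.length_append, List.length_map,
      length_positions t, length_positionsList (i+1) ts, sizeList]
end

lemma pairSum_append (A B : List (List ℕ)) :
    pairSum (A ++ B) = pairSum A + pairSum B +
      (A.map (fun p => (B.map (pathDist p)).sum)).sum := by
  induction A with
  | nil => simp [pairSum]
  | cons p A ih =>
    simp only [List.cons_append, pairSum, ih, List.append_eq, List.map_append, List.sum_append,
      List.map_cons, List.sum_cons]
    omega

lemma pairSum_map (f : List ℕ → List ℕ) :
    ∀ (L : List (List ℕ)), (∀ p ∈ L, ∀ q ∈ L, pathDist (f p) (f q) = pathDist p q) →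
    pairSum (L.map f) = pairSum L := by
  intro L
  induction L with
  | nil => intro _; rfl
  | cons p L ih =>
    intro h
    simp only [List.map_cons, pairSum, List.map_map]
    rw [ih (fun a ha b hb => h a (by simp [ha]) b (by simp [hb]))]
    congr 1
    apply congrArg List.sum
    exact List.map_congr_left (fun q hq => h p (by simp) q (by simp [hq]))

private def wpair : List (List ℕ) → ℕ
  | [p, q] => pathDist p q
  | _ => 0

lemma sum_sublistsLen_one (p : List ℕ) (L : List (List ℕ)) :
    (((L.sublistsLen 1).map (fun s => wpair (p :: s))).sum = (L.map (pathDist p)).sum) := by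
  induction L with
  | nil => rfl
  | cons a L ih =>
    rw [List.sublistsLen_succ_cons]
    simp only [List.sublistsLen_zero, List.map_append, List.sum_append, List.map_cons,
      List.sum_cons, List.map_map, List.map_nil, List.sum_nil, ih]
    simp [wpair]
    omega

lemma sum_sublistsLen_two (L : List (List ℕ)) :
    ((L.sublistsLen 2).map wpair).sum = pairSum L := by
  induction L with
  | nil => rfl
  | cons p L ih =>
    rw [List.sublistsLen_succ_cons]
    simp only [List.map_append, List.sum_append, List.map_map, ih, pairSum]
    have : (List.map (wpair ∘ List.cons p) (L.sublistsLen 1)).sum = (L.map (pathDist p)).sum :=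
      sum_sublistsLen_one p L
    omega

lemma wiener_eq_pairSum (T : PlaneTree) : wiener T = pairSum (positions T) := by
  rw [← sum_sublistsLen_two]
  rfl

lemma depthSum_cons (p : List ℕ) (L : List (List ℕ)) :
    depthSum (p :: L) = p.length + depthSum L := by simp [depthSum]

lemma sum_map_const_add_length (c : ℕ) (L : List (List ℕ)) :
    (L.map (fun q => c + q.length)).sum = L.length * c + depthSum L := by
  induction L with
  | nil => simp [depthSum]
  | cons q L ih =>
    simp only [List.map_cons, List.sum_cons, ih, depthSum, List.length_cons] at *
    ring

lemma size_node_cons (t : PlaneTree) (ts : List PlaneTree) :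
    size (node (t :: ts)) = size t + size (node ts) := by
  simp only [size, sizeList]
  omega

lemma size_node_nil : size (node []) = 1 := rfl

lemma one_le_size (T : PlaneTree) : 1 ≤ size T := by
  match T with
  | .node ts => simp only [size]; omega

lemma dsum_node_nil : dsum (node []) = 0 := rfl

lemma wiener_node_nil : wiener (node []) = 0 := rfl

lemma depthSum_append (A B : List (List ℕ)) :
    depthSum (A ++ B) = depthSum A + depthSum B := by
  simp [depthSum]

lemma depthSum_positionsList (ts : List PlaneTree) :
    depthSum (positionsList 0 ts) = dsum (node ts) := by
  simp [dsum, positions, depthSum]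

lemma positions_node_cons (t : PlaneTree) (ts : List PlaneTree) :
    positions (node (t :: ts)) =
      [] :: ((positions t).map (List.cons 0) ++ (positionsList 0 ts).map shiftPos) := by
  simp [positions, positionsList, positionsList_succ]

lemma depthSum_map_cons0 (t : PlaneTree) :
    depthSum ((positions t).map (List.cons 0)) = size t + dsum t := by
  rw [← length_positions, dsum]
  generalize (positions t) = L
  induction L with
  | nil => simp [depthSum]
  | cons a l ih =>
    simp only [List.map_cons, depthSum_cons, List.length_cons] at *
    omega

lemma depthSum_map_shift (L : List (List ℕ)) :
    depthSum (L.map shiftPos) = depthSum L := by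
  induction L with
  | nil => rfl
  | cons a l ih =>
    simp only [List.map_cons, depthSum_cons, length_shiftPos, ih]

lemma dsum_node_cons (t : PlaneTree) (ts : List PlaneTree) :
    dsum (node (t :: ts)) = dsum t + size t + dsum (node ts) := by
  rw [dsum, positions_node_cons, depthSum_cons, depthSum_append, depthSum_map_cons0,
    depthSum_map_shift, depthSum_positionsList]
  simp only [List.length_nil]
  omega

lemma sum_map_pathDist_nil (L : List (List ℕ)) :
    (L.map (pathDist [])).sum = depthSum L := by
  unfold depthSum
  congr 1
  exact List.map_congr_left (fun q _ => pathDist_nil_left q)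

lemma sum_map_affine (a d : ℕ) (L : List (List ℕ)) :
    (L.map (fun p => a * (p.length + 1) + d)).sum
      = a * (depthSum L + L.length) + L.length * d := by
  induction L with
  | nil => simp [depthSum]
  | cons p L ih =>
    simp only [List.map_cons, List.sum_cons, ih, depthSum_cons, List.length_cons]
    ring

lemma positions_node (ts : List PlaneTree) :
    positions (node ts) = [] :: positionsList 0 ts := by
  simp [positions]

lemma size_node (ts : List PlaneTree) : size (node ts) = 1 + sizeList ts := rfl

theorem wiener_node_cons (t : PlaneTree) (ts : List PlaneTree) :
    wiener (node (t :: ts)) = wiener t + wiener (node ts) + dsum t * size (node ts) +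
      size t * dsum (node ts) + size t * size (node ts) := by
  set P1 := positions t with hP1
  set L0 := positionsList 0 ts with hL0
  set A := P1.map (List.cons 0) with hA
  set B := L0.map shiftPos with hB
  have hmem : ∀ q ∈ L0, q ≠ [] := fun q hq => mem_positionsList_ne_nil hq
  have hlen0 : L0.length = sizeList ts := length_positionsList 0 ts
  have hlenP : P1.length = size t := length_positions t
  -- main expansion
  have hmain : wiener (node (t :: ts)) =
      depthSum A + depthSum B + (pairSum A + pairSum B +
        (A.map (fun p => (B.map (pathDist p)).sum)).sum) := by
    rw [wiener_eq_pairSum, positions_node_cons, pairSum, pairSum_append,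
      List.map_append, List.sum_append, sum_map_pathDist_nil, sum_map_pathDist_nil]
  have hA' : pairSum A = wiener t := by
    rw [hA, pairSum_map (List.cons 0) P1 (fun p _ q _ => pathDist_cons_same 0 p q),
      wiener_eq_pairSum]
  have hB' : pairSum B = pairSum L0 := by
    rw [hB]
    exact pairSum_map shiftPos L0
      (fun p hp q hq => pathDist_shift (hmem p hp) (hmem q hq))
  have hR : wiener (node ts) = dsum (node ts) + pairSum L0 := by
    rw [wiener_eq_pairSum, positions_node, pairSum, sum_map_pathDist_nil,
      depthSum_positionsList]
  have hdA : depthSum A = size t + dsum t := depthSum_map_cons0 t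
  have hdB : depthSum B = dsum (node ts) := by
    rw [hB, depthSum_map_shift, hL0, depthSum_positionsList]
  have hcross : (A.map (fun p => (B.map (pathDist p)).sum)).sum =
      sizeList ts * (dsum t + size t) + size t * dsum (node ts) := by
    have hinner : ∀ p ∈ P1, (B.map (pathDist (List.cons 0 p))).sum =
        sizeList ts * (p.length + 1) + dsum (node ts) := by
      intro p _
      rw [hB, List.map_map]
      have : List.map (pathDist (0 :: p) ∘ shiftPos) L0
          = List.map (fun q => (p.length + 1) + q.length) L0 :=
        List.map_congr_left (fun q hq => pathDist_zero_shift p (hmem q hq))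
      rw [this, sum_map_const_add_length, hlen0, hL0, depthSum_positionsList]
    rw [hA, List.map_map]
    rw [show List.map ((fun p => (List.map (pathDist p) B).sum) ∘ List.cons 0) P1
        = List.map (fun p => sizeList ts * (p.length + 1) + dsum (node ts)) P1 from
      List.map_congr_left (fun p hp => hinner p hp)]
    rw [sum_map_affine, hlenP]
    have : depthSum P1 = dsum t := rfl
    rw [this]
  rw [hmain, hA', hB', hdA, hdB, hcross, hR, size_node]
  ring

/-! ### Part 2: enumeration of plane trees by size -/

def treesL : ℕ → List (List PlaneTree)
  | 0 => [[]]
  | (m+1) =>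
    (List.range (m+1)).attach.flatMap (fun b =>
      (treesL (m - b.1)).flatMap (fun l => (treesL b.1).map (fun r => PlaneTree.node l :: r)))
  decreasing_by
  · exact List.mem_range.mp b.2
  · exact Nat.lt_succ_of_le (Nat.sub_le m b.1)

def trees : ℕ → List PlaneTree
  | 0 => []
  | (m+1) => (treesL m).map node

lemma mem_treesL_succ {l : List PlaneTree} {m : ℕ} :
    l ∈ treesL (m+1) ↔ ∃ b < m + 1, ∃ l' ∈ treesL (m - b), ∃ r ∈ treesL b,
      node l' :: r = l := by
  rw [treesL]
  simp only [List.mem_flatMap, List.mem_map, List.mem_attach, true_and]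
  constructor
  · rintro ⟨⟨b, hb⟩, l', hl', r, hr, rfl⟩
    exact ⟨b, List.mem_range.mp hb, l', hl', r, hr, rfl⟩
  · rintro ⟨b, hb, l', hl', r, hr, rfl⟩
    exact ⟨⟨b, List.mem_range.mpr hb⟩, l', hl', r, hr, rfl⟩

lemma sizeList_of_mem_treesL : ∀ n : ℕ, ∀ l ∈ treesL n, sizeList l = n := by
  intro n
  induction n using Nat.strong_induction_on with
  | _ n ih =>
    match n with
    | 0 => intro l hl; simp only [treesL, List.mem_singleton] at hl; subst hl; rfl
    | (m+1) =>
      intro l hl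
      rw [mem_treesL_succ] at hl
      obtain ⟨b, hb, l', hl', r, hr, rfl⟩ := hl
      have h1 := ih (m - b) (by omega) l' hl'
      have h2 := ih b (by omega) r hr
      simp only [sizeList, size, h1, h2]
      omega

lemma mem_treesL_of_sizeList : ∀ n : ℕ, ∀ l : List PlaneTree, sizeList l = n → l ∈ treesL n := by
  intro n
  induction n using Nat.strong_induction_on with
  | _ n ih =>
    match n with
    | 0 =>
      intro l hl
      match l with
      | [] => simp [treesL]
      | (node l'') :: r => simp [sizeList, size] at hl
    | (m+1) =>
      intro l hl
      match l with
      | [] => simp [sizeList] at hl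
      | (node l'') :: r =>
        simp only [sizeList, size] at hl
        set b := sizeList r with hb
        have hble : b ≤ m := by omega
        have hl'' : sizeList l'' = m - b := by omega
        rw [mem_treesL_succ]
        exact ⟨b, by omega, l'', ih (m - b) (by omega) l'' hl'',
          r, ih b (by omega) r rfl, rfl⟩

lemma nodup_treesL : ∀ n : ℕ, (treesL n).Nodup := by
  intro n
  induction n using Nat.strong_induction_on with
  | _ n ih =>
    match n with
    | 0 => simp [treesL]
    | (m+1) =>
      rw [treesL]
      rw [List.nodup_flatMap]
      constructor
      · rintro ⟨b, hb⟩ -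
        rw [List.nodup_flatMap]
        constructor
        · intro l' _
          exact (ih b (List.mem_range.mp hb)).map
            (fun x y hxy => by simpa using hxy)
        · refine ((ih (m - b) (Nat.lt_succ_of_le (Nat.sub_le m b))).imp ?_)
          intro l₁ l₂ hne
          intro x hx₁ hx₂
          simp only [List.mem_map] at hx₁ hx₂
          obtain ⟨r₁, _, rfl⟩ := hx₁
          obtain ⟨r₂, _, h⟩ := hx₂
          apply hne
          have := (List.cons.injEq _ _ _ _).mp h
          exact (node.injEq _ _).mp this.1.symm ▸ rfl
      · have : (List.range (m+1)).attach.Pairwise (fun a b => a.1 ≠ b.1) := by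
          rw [← List.pairwise_map (f := Subtype.val)]
          simp only [List.attach_map_subtype_val]
          exact (List.nodup_range)
        refine this.imp ?_
        rintro ⟨b₁, hb₁⟩ ⟨b₂, hb₂⟩ hne x hx₁ hx₂
        simp only [List.mem_flatMap, List.mem_map] at hx₁ hx₂
        obtain ⟨l₁, _, r₁, hr₁, rfl⟩ := hx₁
        obtain ⟨l₂, _, r₂, hr₂, h⟩ := hx₂
        apply hne
        have htail : r₂ = r₁ := ((List.cons.injEq _ _ _ _).mp h).2
        have e1 := sizeList_of_mem_treesL b₁ r₁ hr₁
        have e2 := sizeList_of_mem_treesL b₂ r₂ hr₂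
        simp only [htail, e1] at e2
        exact e2

lemma nodup_trees (n : ℕ) : (trees n).Nodup := by
  match n with
  | 0 => simp [trees]
  | (m+1) =>
    exact (nodup_treesL m).map (fun x y hxy => (node.injEq _ _).mp hxy)

lemma size_of_mem_trees {T : PlaneTree} {n : ℕ} (h : T ∈ trees n) : size T = n := by
  match n with
  | 0 => simp [trees] at h
  | (m+1) =>
    simp only [trees, List.mem_map] at h
    obtain ⟨l, hl, rfl⟩ := h
    rw [size_node, sizeList_of_mem_treesL m l hl, Nat.add_comm]

lemma mem_trees_of_size {T : PlaneTree} {n : ℕ} (h : size T = n) : T ∈ trees n := by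
  match T with
  | node ts =>
    rw [size_node] at h
    match n with
    | 0 => omega
    | (m+1) =>
      simp only [trees, List.mem_map]
      exact ⟨ts, mem_treesL_of_sizeList m ts (by omega), rfl⟩

lemma sum_map_flatMap {α β : Type*} (l : List α) (g : α → List β) (f : β → ℕ) :
    ((l.flatMap g).map f).sum = (l.map (fun x => ((g x).map f).sum)).sum := by
  induction l with
  | nil => rfl
  | cons a l ih => simp [List.flatMap_cons, ih]

lemma sum_map_attach {α : Type*} (l : List α) (f : α → ℕ) :
    ((l.attach).map (fun x => f x.1)).sum = (l.map f).sum := by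
  rw [show l.attach.map (fun x => f x.1) = (l.attach.map Subtype.val).map f by
    rw [List.map_map]; rfl, List.attach_map_subtype_val]

lemma trees_succ (k : ℕ) : trees (k+1) = (treesL k).map node := rfl

lemma sum_trees_rec (g : PlaneTree → ℕ) (h : PlaneTree → PlaneTree → ℕ)
    (hg : ∀ (t : PlaneTree) (r : List PlaneTree), g (node (t :: r)) = h t (node r)) (m : ℕ) :
    ((trees (m+2)).map g).sum =
      ((List.range (m+1)).map (fun b =>
        ((trees (m - b + 1)).map (fun t => ((trees (b+1)).map (h t)).sum)).sum)).sum := by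
  rw [trees_succ, List.map_map, treesL]
  rw [sum_map_flatMap]
  rw [sum_map_attach (List.range (m+1)) (fun b => (((treesL (m - b)).flatMap
      (fun l => (treesL b).map (fun r => PlaneTree.node l :: r))).map (g ∘ node)).sum)]
  congr 1
  apply List.map_congr_left
  intro b _
  rw [sum_map_flatMap, trees_succ (m - b), trees_succ b, List.map_map]
  congr 1
  apply List.map_congr_left
  intro l _
  simp only [Function.comp_apply, List.map_map]
  congr 1
  apply List.map_congr_left
  intro r _
  exact hg (node l) r

def Cn (n : ℕ) : ℕ := (trees n).length
def Pn (n : ℕ) : ℕ := ((trees n).map dsum).sum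
def Fn (n : ℕ) : ℕ := ((trees n).map wiener).sum

lemma trees_one : trees 1 = [node []] := by
  rw [trees_succ, treesL]
  rfl

lemma Cn_one : Cn 1 = 1 := by simp [Cn, trees_one]
lemma Pn_one : Pn 1 = 0 := by simp [Pn, trees_one, dsum_node_nil]
lemma Fn_one : Fn 1 = 0 := by simp [Fn, trees_one, wiener_node_nil]

lemma lsum_congr {α : Type*} {l : List α} {f g : α → ℕ} (h : ∀ x ∈ l, f x = g x) :
    (l.map f).sum = (l.map g).sum := congrArg _ (List.map_congr_left h)

lemma lsum_const {α : Type*} (l : List α) (c : ℕ) :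
    (l.map (fun _ => c)).sum = l.length * c := by
  induction l with
  | nil => simp
  | cons a l ih => simp [ih]; ring

lemma Cn_rec (m : ℕ) :
    Cn (m+2) = ((List.range (m+1)).map (fun b => Cn (m-b+1) * Cn (b+1))).sum := by
  have hc : ∀ k, Cn k = ((trees k).map (fun _ => 1)).sum := fun k => by
    rw [lsum_const, Cn, Nat.mul_one]
  rw [hc, sum_trees_rec (fun _ => 1) (fun _ _ => 1) (fun _ _ => rfl) m]
  apply lsum_congr
  intro b _
  rw [lsum_congr (fun t _ => lsum_const (trees (b+1)) 1), lsum_const]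
  rw [Cn, Cn, Nat.mul_one]

lemma sum_p_inner (l : List PlaneTree) (c : ℕ) :
    (l.map (fun R => c + dsum R)).sum = l.length * c + (l.map dsum).sum := by
  induction l with
  | nil => simp
  | cons R l ih => simp only [List.map_cons, List.sum_cons, List.length_cons, ih]; ring

lemma sum_p_outer (l : List PlaneTree) (a : ℕ) (hs : ∀ t ∈ l, size t = a) (k1 k2 : ℕ) :
    (l.map (fun t => k1 * (dsum t + size t) + k2)).sum
      = k1 * (l.map dsum).sum + k1 * a * l.length + l.length * k2 := by
  induction l with
  | nil => simp
  | cons t l ih =>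
    have ht : size t = a := hs t (by simp)
    simp only [List.map_cons, List.sum_cons, List.length_cons,
      ih (fun x hx => hs x (by simp [hx]))]
    rw [ht]; ring

lemma Pn_rec (m : ℕ) :
    Pn (m+2) = ((List.range (m+1)).map (fun b =>
      Cn (b+1) * Pn (m-b+1) + Cn (b+1) * (m-b+1) * Cn (m-b+1)
        + Cn (m-b+1) * Pn (b+1))).sum := by
  rw [Pn, sum_trees_rec dsum (fun t R => dsum t + size t + dsum R)
    (fun t r => dsum_node_cons t r) m]
  apply lsum_congr
  intro b _
  rw [lsum_congr (fun t _ => sum_p_inner (trees (b+1)) (dsum t + size t))]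
  rw [sum_p_outer (trees (m-b+1)) (m-b+1) (fun t ht => size_of_mem_trees ht)]
  rw [Cn, Cn, Pn, Pn]

lemma sum_h_generic (l : List PlaneTree) (s : ℕ) (hs : ∀ R ∈ l, size R = s) (t : PlaneTree) :
    (l.map (fun R => wiener t + wiener R + dsum t * size R + size t * dsum R
        + size t * size R)).sum
      = l.length * wiener t + (l.map wiener).sum + (l.length * s) * dsum t
        + size t * (l.map dsum).sum + size t * (l.length * s) := by
  induction l with
  | nil => simp
  | cons R l ih =>
    have hR : size R = s := hs R (by simp)
    simp only [List.map_cons, List.sum_cons, List.length_cons,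
      ih (fun x hx => hs x (by simp [hx]))]
    rw [hR]; ring

lemma sum_w_outer (l : List PlaneTree) (a : ℕ) (hs : ∀ t ∈ l, size t = a)
    (k1 k2 k3 k4 k5 : ℕ) :
    (l.map (fun t => k1 * wiener t + k2 + k3 * dsum t + size t * k4 + size t * k5)).sum
      = k1 * (l.map wiener).sum + l.length * k2 + k3 * (l.map dsum).sum
        + a * k4 * l.length + a * k5 * l.length := by
  induction l with
  | nil => simp
  | cons t l ih =>
    have ht : size t = a := hs t (by simp)
    simp only [List.map_cons, List.sum_cons, List.length_cons,
      ih (fun x hx => hs x (by simp [hx]))]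
    rw [ht]; ring

lemma Fn_rec (m : ℕ) :
    Fn (m+2) = ((List.range (m+1)).map (fun b =>
      Cn (b+1) * Fn (m-b+1) + Cn (m-b+1) * Fn (b+1)
        + (b+1) * Cn (b+1) * Pn (m-b+1) + (m-b+1) * Cn (m-b+1) * Pn (b+1)
        + ((m-b+1) * (b+1)) * (Cn (m-b+1) * Cn (b+1)))).sum := by
  rw [Fn, sum_trees_rec wiener
    (fun t R => wiener t + wiener R + dsum t * size R + size t * dsum R + size t * size R)
    (fun t r => wiener_node_cons t r) m]
  apply lsum_congr
  intro b _
  rw [lsum_congr (fun t _ =>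
    sum_h_generic (trees (b+1)) (b+1) (fun R hR => size_of_mem_trees hR) t)]
  rw [sum_w_outer (trees (m-b+1)) (m-b+1) (fun t ht => size_of_mem_trees ht)]
  rw [Cn, Cn, Pn, Pn, Fn, Fn]
  ring

/-! ### Part 3: arithmetic identities -/

lemma listsum_range (n : ℕ) (f : ℕ → ℕ) :
    ((List.range n).map f).sum = ∑ i ∈ Finset.range n, f i := by
  induction n with
  | zero => rfl
  | succ n ih =>
    rw [Finset.sum_range_succ, List.range_succ, List.map_append, List.sum_append, ih]; simp

lemma catalan_conv (n : ℕ) :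
    catalan (n+1) = ∑ i ∈ Finset.range (n+1), catalan i * catalan (n - i) := by
  rw [catalan_succ, ← Fin.sum_univ_eq_sum_range]

lemma binom_step (k : ℕ) :
    Nat.centralBinom (k+1) + 2 * catalan k = 4 * Nat.centralBinom k := by
  have h1 := Nat.succ_mul_centralBinom_succ k
  have h2 := succ_mul_catalan_eq_centralBinom k
  apply Nat.eq_of_mul_eq_mul_left (Nat.succ_pos k)
  calc (k+1) * (Nat.centralBinom (k+1) + 2 * catalan k)
      = (k+1) * Nat.centralBinom (k+1) + 2 * ((k+1) * catalan k) := by ring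
    _ = 2 * (2*k+1) * Nat.centralBinom k + 2 * Nat.centralBinom k := by rw [h1, h2]
    _ = (k+1) * (4 * Nat.centralBinom k) := by ring

lemma S_id (m : ℕ) :
    2 * (∑ i ∈ Finset.range (m+1), 4^(m-i) * catalan i) + Nat.centralBinom (m+1)
      = 4^(m+1) := by
  induction m with
  | zero =>
    have : Nat.centralBinom 1 = 2 := by decide
    simp [this]
  | succ m ih =>
    have hsplit : ∑ i ∈ Finset.range (m+2), 4^(m+1-i) * catalan i
        = 4 * (∑ i ∈ Finset.range (m+1), 4^(m-i) * catalan i) + catalan (m+1) := by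
      rw [Finset.sum_range_succ, Nat.sub_self, pow_zero, one_mul, Finset.mul_sum]
      congr 1
      apply Finset.sum_congr rfl
      intro i hi
      have : m + 1 - i = (m - i) + 1 := by
        have := Finset.mem_range.mp hi; omega
      rw [this, pow_succ]; ring
    rw [hsplit]
    have hb := binom_step (m+1)
    have h4 : (4:ℕ)^(m+2) = 4 * 4^(m+1) := by rw [pow_succ]; ring
    omega

lemma aux_sym (m : ℕ) :
    2 * (∑ i ∈ Finset.range (m+1), i * (Nat.centralBinom i * Nat.centralBinom (m-i)))
      = m * ∑ i ∈ Finset.range (m+1), Nat.centralBinom i * Nat.centralBinom (m-i) := by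
  have hrefl : ∑ i ∈ Finset.range (m+1),
        (m-i) * (Nat.centralBinom i * Nat.centralBinom (m-i))
      = ∑ i ∈ Finset.range (m+1),
        i * (Nat.centralBinom i * Nat.centralBinom (m-i)) := by
    rw [← Finset.sum_range_reflect (fun i => i * (Nat.centralBinom i * Nat.centralBinom (m-i)))]
    apply Finset.sum_congr rfl
    intro i hi
    have hi' := Finset.mem_range.mp hi
    have h1 : m + 1 - 1 - i = m - i := by omega
    have h2 : m - (m - i) = i := by omega
    rw [h1, h2]; ring
  have hsum : ∑ i ∈ Finset.range (m+1),
        (i * (Nat.centralBinom i * Nat.centralBinom (m-i))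
          + (m-i) * (Nat.centralBinom i * Nat.centralBinom (m-i)))
      = ∑ i ∈ Finset.range (m+1), m * (Nat.centralBinom i * Nat.centralBinom (m-i)) := by
    apply Finset.sum_congr rfl
    intro i hi
    have hi' := Finset.mem_range.mp hi
    have h : i + (m - i) = m := by omega
    calc i * (Nat.centralBinom i * Nat.centralBinom (m-i))
          + (m-i) * (Nat.centralBinom i * Nat.centralBinom (m-i))
        = (i + (m-i)) * (Nat.centralBinom i * Nat.centralBinom (m-i)) := by ring
      _ = m * (Nat.centralBinom i * Nat.centralBinom (m-i)) := by rw [h]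
  rw [Finset.sum_add_distrib, hrefl, ← Finset.mul_sum] at hsum
  omega

lemma D_step (m : ℕ) :
    ∑ i ∈ Finset.range (m+2), Nat.centralBinom i * Nat.centralBinom (m+1-i)
      = 4 * ∑ i ∈ Finset.range (m+1), Nat.centralBinom i * Nat.centralBinom (m-i) := by
  apply Nat.eq_of_mul_eq_mul_left (Nat.succ_pos m)
  have ha1 := aux_sym (m+1)
  have ha0 := aux_sym m
  have hshift : ∑ i ∈ Finset.range (m+2),
        i * (Nat.centralBinom i * Nat.centralBinom (m+1-i))
      = ∑ j ∈ Finset.range (m+1),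
        (j+1) * (Nat.centralBinom (j+1) * Nat.centralBinom (m-j)) := by
    rw [Finset.sum_range_succ' (fun i => i * (Nat.centralBinom i * Nat.centralBinom (m+1-i)))]
    simp
  have hterm : ∑ j ∈ Finset.range (m+1),
        (j+1) * (Nat.centralBinom (j+1) * Nat.centralBinom (m-j))
      = 4 * (∑ j ∈ Finset.range (m+1),
          j * (Nat.centralBinom j * Nat.centralBinom (m-j)))
        + 2 * ∑ j ∈ Finset.range (m+1), Nat.centralBinom j * Nat.centralBinom (m-j) := by
    rw [Finset.mul_sum, Finset.mul_sum, ← Finset.sum_add_distrib]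
    apply Finset.sum_congr rfl
    intro j _
    have h1 := Nat.succ_mul_centralBinom_succ j
    calc (j+1) * (Nat.centralBinom (j+1) * Nat.centralBinom (m-j))
        = ((j+1) * Nat.centralBinom (j+1)) * Nat.centralBinom (m-j) := by ring
      _ = (2 * (2*j+1) * Nat.centralBinom j) * Nat.centralBinom (m-j) := by rw [h1]
      _ = 4 * (j * (Nat.centralBinom j * Nat.centralBinom (m-j)))
            + 2 * (Nat.centralBinom j * Nat.centralBinom (m-j)) := by ring
  -- (m+1) * D_{m+1} = 2 * Σ i ... = 2*(4*Σ j ... + 2 D_m) and 2 Σ j ... = m * D_m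
  have key : (m+1) * (∑ i ∈ Finset.range (m+2),
      Nat.centralBinom i * Nat.centralBinom (m+1-i))
      = 2 * ∑ i ∈ Finset.range (m+2),
          i * (Nat.centralBinom i * Nat.centralBinom (m+1-i)) := ha1.symm
  rw [key, hshift, hterm]
  -- goal : 2*(4*X + 2*D) = (m+1)*(4*D) with 2*X = m*D
  have : 2 * (∑ j ∈ Finset.range (m+1),
      j * (Nat.centralBinom j * Nat.centralBinom (m-j)))
      = m * ∑ j ∈ Finset.range (m+1), Nat.centralBinom j * Nat.centralBinom (m-j) := ha0
  set X := ∑ j ∈ Finset.range (m+1), j * (Nat.centralBinom j * Nat.centralBinom (m-j))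
  set D := ∑ j ∈ Finset.range (m+1), Nat.centralBinom j * Nat.centralBinom (m-j)
  calc 2 * (4 * X + 2 * D) = 4 * (2 * X) + 4 * D := by ring
    _ = 4 * (m * D) + 4 * D := by rw [this]
    _ = (m+1) * (4 * D) := by ring

lemma D_id (m : ℕ) :
    ∑ i ∈ Finset.range (m+1), Nat.centralBinom i * Nat.centralBinom (m-i) = 4^m := by
  induction m with
  | zero => decide
  | succ m ih => rw [D_step, ih, pow_succ]; ring

/-- `V m = ∑ (m-b) * 4^(m-b-1) * catalan b` -/
def Vs (m : ℕ) : ℕ := ∑ b ∈ Finset.range (m+1), (m-b) * 4^(m-b-1) * catalan b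
/-- `U m = ∑ 4^(m-b) * centralBinom b` -/
def Us (m : ℕ) : ℕ := ∑ b ∈ Finset.range (m+1), 4^(m-b) * Nat.centralBinom b
/-- `Ss m = ∑ 4^(m-b) * catalan b` -/
def Ss (m : ℕ) : ℕ := ∑ b ∈ Finset.range (m+1), 4^(m-b) * catalan b

lemma Vs_succ (m : ℕ) : Vs (m+1) = 4 * Vs m + Ss m := by
  rw [Vs, Finset.sum_range_succ]
  have hlast : (m+1-(m+1)) * 4^(m+1-(m+1)-1) * catalan (m+1) = 0 := by
    rw [Nat.sub_self]; ring
  rw [hlast, Nat.add_zero, Vs, Ss, Finset.mul_sum, ← Finset.sum_add_distrib]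
  apply Finset.sum_congr rfl
  intro b hb
  have hb' := Finset.mem_range.mp hb
  have h1 : m + 1 - b - 1 = m - b := by omega
  have h2 : m + 1 - b = (m - b) + 1 := by omega
  rw [h1, h2]
  rcases Nat.eq_zero_or_pos (m - b) with h | h
  · rw [h]; ring
  · obtain ⟨k, hk⟩ : ∃ k, m - b = k + 1 := ⟨m - b - 1, by omega⟩
    rw [hk, Nat.add_sub_cancel, pow_succ]
    ring

lemma Us_succ (m : ℕ) : Us (m+1) = 4 * Us m + Nat.centralBinom (m+1) := by
  rw [Us, Finset.sum_range_succ, Nat.sub_self, pow_zero, one_mul, Us, Finset.mul_sum]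
  congr 1
  apply Finset.sum_congr rfl
  intro b hb
  have hb' := Finset.mem_range.mp hb
  have : m + 1 - b = (m - b) + 1 := by omega
  rw [this, pow_succ]; ring

lemma E_id (m : ℕ) : 2 * Vs m + Us m = (m+1) * 4^m := by
  induction m with
  | zero => simp [Vs, Us]
  | succ m ih =>
    have hS : 2 * Ss m + Nat.centralBinom (m+1) = 4^(m+1) := S_id m
    rw [Vs_succ, Us_succ]
    calc 2 * (4 * Vs m + Ss m) + (4 * Us m + Nat.centralBinom (m+1))
        = 4 * (2 * Vs m + Us m) + (2 * Ss m + Nat.centralBinom (m+1)) := by ring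
      _ = 4 * ((m+1) * 4^m) + 4^(m+1) := by rw [ih, hS]
      _ = (m+1+1) * 4^(m+1) := by rw [pow_succ]; ring

/-! ### Part 4: closed forms -/

lemma Cn_eq (k : ℕ) : Cn (k+1) = catalan k := by
  induction k using Nat.strong_induction_on with
  | _ k ih =>
    match k with
    | 0 => rw [Cn_one, catalan_zero]
    | (m+1) =>
      rw [Cn_rec m, listsum_range, catalan_conv]
      apply Finset.sum_congr rfl
      intro b hb
      have hb' := Finset.mem_range.mp hb
      rw [ih (m-b) (by omega), ih b (by omega)]
      ring

lemma Pn_eq (k : ℕ) : 2 * Pn (k+1) + Nat.centralBinom k = 4^k := by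
  induction k using Nat.strong_induction_on with
  | _ k ih =>
    match k with
    | 0 =>
      have : Nat.centralBinom 0 = 1 := by decide
      rw [Pn_one, this]
      decide
    | (m+1) =>
      have hP : Pn (m+2) = ∑ b ∈ Finset.range (m+1),
          (Cn (b+1) * Pn (m-b+1) + Cn (b+1) * (m-b+1) * Cn (m-b+1)
            + Cn (m-b+1) * Pn (b+1)) := by
        rw [Pn_rec m, listsum_range]
      have key : ∀ b ∈ Finset.range (m+1),
          2 * (Cn (b+1) * Pn (m-b+1) + Cn (b+1) * (m-b+1) * Cn (m-b+1)
              + Cn (m-b+1) * Pn (b+1))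
            + (catalan b * Nat.centralBinom (m-b) + catalan (m-b) * Nat.centralBinom b)
          = (4^(m-b) * catalan b + 4^b * catalan (m-b))
            + 2 * (catalan b * Nat.centralBinom (m-b)) := by
        intro b hb
        have hb' := Finset.mem_range.mp hb
        rw [Cn_eq b, Cn_eq (m-b)]
        have e1 := ih (m-b) (by omega)
        have e2 := ih b (by omega)
        have e3 := succ_mul_catalan_eq_centralBinom (m-b)
        zify at e1 e2 e3 ⊢
        linear_combination (catalan b : ℤ) * e1 + (catalan (m-b) : ℤ) * e2
          + 2 * (catalan b : ℤ) * e3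
      have hsum := Finset.sum_congr rfl key
      simp only [Finset.sum_add_distrib, ← Finset.mul_sum] at hsum
      have hrefl1 : ∑ b ∈ Finset.range (m+1), catalan (m-b) * Nat.centralBinom b
          = ∑ b ∈ Finset.range (m+1), catalan b * Nat.centralBinom (m-b) := by
        rw [← Finset.sum_range_reflect (fun b => catalan b * Nat.centralBinom (m-b))]
        apply Finset.sum_congr rfl
        intro b hb
        have hb' := Finset.mem_range.mp hb
        have h1 : m + 1 - 1 - b = m - b := by omega
        have h2 : m - (m - b) = b := by omega
        rw [h1, h2]
      have hrefl2 : ∑ b ∈ Finset.range (m+1), 4^b * catalan (m-b)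
          = ∑ b ∈ Finset.range (m+1), 4^(m-b) * catalan b := by
        rw [← Finset.sum_range_reflect (fun b => 4^(m-b) * catalan b)]
        apply Finset.sum_congr rfl
        intro b hb
        have hb' := Finset.mem_range.mp hb
        have h1 : m + 1 - 1 - b = m - b := by omega
        have h2 : m - (m - b) = b := by omega
        rw [h1, h2]
      have hS := S_id m
      simp only [Finset.sum_add_distrib, ← Finset.mul_sum] at hP
      rw [hP]
      omega

lemma Fn_eq (k : ℕ) : Fn (k+1) = k * 4^(k-1) := by
  induction k using Nat.strong_induction_on with
  | _ k ih =>
    match k with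
    | 0 => rw [Fn_one]; rfl
    | (m+1) =>
      have hF : Fn (m+2) = ∑ b ∈ Finset.range (m+1),
          (Cn (b+1) * Fn (m-b+1) + Cn (m-b+1) * Fn (b+1)
            + (b+1) * Cn (b+1) * Pn (m-b+1) + (m-b+1) * Cn (m-b+1) * Pn (b+1)
            + ((m-b+1) * (b+1)) * (Cn (m-b+1) * Cn (b+1))) := by
        rw [Fn_rec m, listsum_range]
      have key : ∀ b ∈ Finset.range (m+1),
          Cn (b+1) * Fn (m-b+1) + Cn (m-b+1) * Fn (b+1)
            + (b+1) * Cn (b+1) * Pn (m-b+1) + (m-b+1) * Cn (m-b+1) * Pn (b+1)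
            + ((m-b+1) * (b+1)) * (Cn (m-b+1) * Cn (b+1))
          = ((m-b) * 4^(m-b-1) * catalan b + b * 4^(b-1) * catalan (m-b))
            + (Nat.centralBinom b * Pn (m-b+1)
                + Nat.centralBinom (m-b) * Pn (b+1))
            + Nat.centralBinom (m-b) * Nat.centralBinom b := by
        intro b hb
        have hb' := Finset.mem_range.mp hb
        rw [Cn_eq b, Cn_eq (m-b), ih (m-b) (by omega), ih b (by omega)]
        have e3 := succ_mul_catalan_eq_centralBinom (m-b)
        have e4 := succ_mul_catalan_eq_centralBinom b
        zify at e3 e4 ⊢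
        linear_combination ((Pn (m-b+1) : ℤ)
            + (((m - b : ℕ) : ℤ) + 1) * (catalan (m-b) : ℤ)) * e4
          + ((Pn (b+1) : ℤ) + (Nat.centralBinom b : ℤ)) * e3
      have hsum := Finset.sum_congr rfl key
      simp only [Finset.sum_add_distrib] at hsum hF
      have hreflV : ∑ b ∈ Finset.range (m+1), b * 4^(b-1) * catalan (m-b)
          = ∑ b ∈ Finset.range (m+1), (m-b) * 4^(m-b-1) * catalan b := by
        rw [← Finset.sum_range_reflect (fun b => (m-b) * 4^(m-b-1) * catalan b)]
        apply Finset.sum_congr rfl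
        intro b hb
        have hb' := Finset.mem_range.mp hb
        have h1 : m + 1 - 1 - b = m - b := by omega
        have h2 : m - (m - b) = b := by omega
        rw [h1, h2]
      have hreflP : ∑ b ∈ Finset.range (m+1), Nat.centralBinom (m-b) * Pn (b+1)
          = ∑ b ∈ Finset.range (m+1), Nat.centralBinom b * Pn (m-b+1) := by
        rw [← Finset.sum_range_reflect (fun b => Nat.centralBinom b * Pn (m-b+1))]
        apply Finset.sum_congr rfl
        intro b hb
        have hb' := Finset.mem_range.mp hb
        have h1 : m + 1 - 1 - b = m - b := by omega
        have h2 : m - (m - b) = b := by omega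
        rw [h1, h2]
      have hD : ∑ b ∈ Finset.range (m+1), Nat.centralBinom (m-b) * Nat.centralBinom b
          = 4^m := by
        rw [← D_id m]
        apply Finset.sum_congr rfl
        intro b _
        ring
      have hTU : ∀ b ∈ Finset.range (m+1),
          2 * (Nat.centralBinom b * Pn (m-b+1))
            + Nat.centralBinom (m-b) * Nat.centralBinom b
          = 4^(m-b) * Nat.centralBinom b := by
        intro b hb
        have e := Pn_eq (m-b)
        zify at e ⊢
        linear_combination (Nat.centralBinom b : ℤ) * e
      have hTUs := Finset.sum_congr rfl hTU
      simp only [Finset.sum_add_distrib, ← Finset.mul_sum] at hTUs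
      have hV : Vs m = ∑ b ∈ Finset.range (m+1), (m-b) * 4^(m-b-1) * catalan b := rfl
      have hUs : Us m = ∑ b ∈ Finset.range (m+1), 4^(m-b) * Nat.centralBinom b := rfl
      have hfinal : Fn (m+2) = 2 * Vs m + Us m := by omega
      rw [hfinal, E_id m]
      norm_num

end PlaneTree

theorem total_wiener_index_plane_trees (n : ℕ) (hn : 2 ≤ n) :
    (∑ᶠ T : {T : PlaneTree // T.size = n}, T.1.wiener) = (n - 1) * 4 ^ (n - 2) := by
  classical
  have hl : ∀ T ∈ PlaneTree.trees n, PlaneTree.size T = n :=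
    fun T hT => PlaneTree.size_of_mem_trees hT
  set l : List {T : PlaneTree // T.size = n} :=
    (PlaneTree.trees n).pmap (fun T h => ⟨T, h⟩) hl with hldef
  have hnodup : l.Nodup :=
    (PlaneTree.nodup_trees n).pmap (fun a _ b _ h => congrArg Subtype.val h)
  have hcomplete : ∀ x : {T : PlaneTree // T.size = n}, x ∈ l := by
    rintro ⟨T, hT⟩
    rw [hldef, List.mem_pmap]
    exact ⟨T, PlaneTree.mem_trees_of_size hT, rfl⟩
  haveI F : Fintype {T : PlaneTree // T.size = n} := ⟨⟨↑l, hnodup⟩, hcomplete⟩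
  rw [finsum_eq_sum_of_fintype]
  have huniv : (Finset.univ : Finset {T : PlaneTree // T.size = n}) = ⟨↑l, hnodup⟩ := by
    ext x
    exact iff_of_true (Finset.mem_univ x) (hcomplete x)
  rw [huniv]
  have hsum : ∑ x ∈ (⟨↑l, hnodup⟩ : Finset {T : PlaneTree // T.size = n}), x.1.wiener
      = (l.map (fun x => x.1.wiener)).sum := by
    simp [Finset.sum]
  rw [hsum]
  have hmap : l.map (fun x => x.1.wiener) = (PlaneTree.trees n).map PlaneTree.wiener := by
    rw [hldef, List.map_pmap]
    exact List.pmap_eq_map _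
  rw [hmap]
  have hFn : ((PlaneTree.trees n).map PlaneTree.wiener).sum = PlaneTree.Fn n := rfl
  rw [hFn]
  obtain ⟨k, rfl⟩ : ∃ k, n = k + 1 := ⟨n - 1, by omega⟩
  rw [PlaneTree.Fn_eq k]
  congr 1
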